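/- Suppose every internal vertex of T has at most b children, where b ≥ 2, and let B ≥ 2 be an integer. There is an absolute constant C such that for every downward path in T consisting of s+1 vertices (each vertex the parent of the next), the set of positions of the path's vertices in vEB_ε(T) can be covered by at most C·(s/(ε·log_b B) + 1) sets of consecutive positions, each of length at most B. -/

import Mathlib

namespace VEB

inductive OTree : Type where
  | node : List OTree → OTree

def OTree.children : OTree → List OTree
  | .node cs => cs

mutual
  def height : OTree → ℕ
    | .node cs => 1 + heightList cs
  def heightList : List OTree → ℕ
    | [] => 0
    | c :: cs => max (height c) (heightList cs)
end

def subtreeAt? : OTree → List ℕ → Option OTree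
  | t, [] => some t
  | t, i :: p =>
    match t.children[i]? with
    | some c => subtreeAt? c p
    | none => none

/-- `p` is (the path of) a vertex of `t`. -/
def IsVertex (t : OTree) (p : List ℕ) : Prop := (subtreeAt? t p).isSome

/-- `p` is a leaf of `t`. -/
def IsLeaf (t : OTree) (p : List ℕ) : Prop := subtreeAt? t p = some (.node [])

/-- All leaves of `t` are at the same depth (the bottom level). -/
def Uniform (t : OTree) : Prop := ∀ p, IsLeaf t p → p.length + 1 = height t

/-- The top `m+1` levels of `t` (the truncation of height `m+1`). -/
def trunc : ℕ → OTree → OTree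
  | 0, _ => .node []
  | m+1, t => .node (t.children.map (trunc m))

/-- Paths of the vertices at depth `m`, in left-to-right order. -/
def levelPaths : ℕ → OTree → List (List ℕ)
  | 0, _ => [[]]
  | m+1, t => (t.children.zipIdx.map fun ic => (levelPaths m ic.1).map (ic.2 :: ·)).flatten

/-- The level at which a tree of height `h` is cut: `max ⌊ε h⌋ 1`. -/
noncomputable def cutLevel (ε : ℝ) (h : ℕ) : ℕ := max ⌊ε * (h : ℝ)⌋₊ 1

/-- The van Emde Boas order of the vertex paths of `t` (with recursion fuel). -/
noncomputable def vEBAux (ε : ℝ) : ℕ → OTree → List (List ℕ)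
  | 0, _ => []
  | fuel+1, t =>
    if height t ≤ 1 then [[]]
    else
      let m := cutLevel ε (height t)
      vEBAux ε fuel (trunc (m - 1) t) ++
        ((levelPaths m t).map fun q =>
          match subtreeAt? t q with
          | some s => (vEBAux ε fuel s).map (q ++ ·)
          | none => []).flatten

/-- The van Emde Boas order `vEB_ε(t)` of the vertex paths of `t`. -/
noncomputable def vEB (ε : ℝ) (t : OTree) : List (List ℕ) := vEBAux ε (height t) t

/-- Position (index) of vertex `p` in the van Emde Boas order. -/
noncomputable def pos (ε : ℝ) (t : OTree) (p : List ℕ) : ℕ := (vEB ε t).idxOf p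

/-- `A` is a set of vertices occupying consecutive positions in `vEB_ε(t)`. -/
def MemInterval (ε : ℝ) (t : OTree) (A : Set (List ℕ)) : Prop :=
  ∃ i n, A = {p | p ∈ ((vEB ε t).drop i).take n}

/-- The vertices of the decomposition `D` of `t`: pairs `(p, k)` of the root path
and the height of a decomposition subtree (with recursion fuel). -/
noncomputable def decompAux (ε : ℝ) : ℕ → OTree → List (List ℕ × ℕ)
  | 0, _ => []
  | fuel+1, t =>
    if height t ≤ 1 then [([], 1)]
    else
      let m := cutLevel ε (height t)
      ([], height t) ::
        (decompAux ε fuel (trunc (m - 1) t) ++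
          ((levelPaths m t).map fun q =>
            match subtreeAt? t q with
            | some s => (decompAux ε fuel s).map fun r => (q ++ r.1, r.2)
            | none => []).flatten)

/-- The vertices of the decomposition `D` of `t`. -/
noncomputable def decompVerts (ε : ℝ) (t : OTree) : List (List ℕ × ℕ) :=
  decompAux ε (height t) t

/-- The children in the decomposition tree `D` of the decomposition vertex `(p, k)`:
the top tree followed by the bottom trees in left-to-right order. -/
noncomputable def dChildren (ε : ℝ) (t : OTree) (p : List ℕ) (k : ℕ) : List (List ℕ × ℕ) :=
  if k ≤ 1 then []
  else
    match subtreeAt? t p with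
    | some s =>
      (p, cutLevel ε k) ::
        (levelPaths (cutLevel ε k) s).map fun q => (p ++ q, k - cutLevel ε k)
    | none => []

/-- The decomposition subtree `(p, k)` contains the vertex `w` of `t`;
equivalently, the leaf `{w}` of `D` lies in the subtree of `D` rooted at `(p, k)`. -/
def DContains (p : List ℕ) (k : ℕ) (w : List ℕ) : Prop :=
  p <+: w ∧ w.length < p.length + k

/-- Vertex `v` is to the left of the branch with leaf `ℓ`. -/
def LeftOfBranch (v ℓ : List ℕ) : Prop := List.Lex (· < ·) v (ℓ.take v.length)

/-- Vertex `v` is to the right of the branch with leaf `ℓ`. -/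
def RightOfBranch (v ℓ : List ℕ) : Prop := List.Lex (· < ·) (ℓ.take v.length) v

/-- Every internal vertex of `t` has at least `a` children. -/
def MinArity (t : OTree) (a : ℕ) : Prop :=
  ∀ p s, subtreeAt? t p = some s → s.children ≠ [] → a ≤ s.children.length

/-- Every internal vertex of `t` has at most `b` children. -/
def MaxArity (t : OTree) (b : ℕ) : Prop :=
  ∀ p s, subtreeAt? t p = some s → s.children.length ≤ b

/-- `w` lies on the leftmost branch descending from `v` (always taking the leftmost child). -/
def OnLeftmostBranch (v w : List ℕ) : Prop :=
  v <+: w ∧ ∀ n (hn : n < w.length), v.length ≤ n → w.get ⟨n, hn⟩ = 0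

/-- `w` lies on the rightmost branch descending from `v` (always taking the rightmost child). -/
def OnRightmostBranch (t : OTree) (v w : List ℕ) : Prop :=
  v <+: w ∧ ∀ n (hn : n < w.length), v.length ≤ n →
    ∀ s, subtreeAt? t (w.take n) = some s → w.get ⟨n, hn⟩ + 1 = s.children.length

open List

-- ## Section 1: basic tree lemmas

lemma one_le_height (t : OTree) : 1 ≤ height t := by
  cases t with | node cs => rw [height]; omega

lemma height_mem_le {c : OTree} {cs : List OTree} (h : c ∈ cs) :
    height c ≤ heightList cs := by
  induction cs with
  | nil => cases h
  | cons d ds ih =>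
    rw [heightList]
    rcases List.mem_cons.mp h with h | h
    · subst h; exact le_max_left _ _
    · exact le_trans (ih h) (le_max_right _ _)

lemma heightList_eq_zero {cs : List OTree} (h : heightList cs = 0) : cs = [] := by
  cases cs with
  | nil => rfl
  | cons c cs => exfalso; rw [heightList] at h; have := one_le_height c; omega

lemma subtreeAt?_append (t : OTree) (a b : List ℕ) :
    subtreeAt? t (a ++ b) = (subtreeAt? t a).bind (fun s => subtreeAt? s b) := by
  induction a generalizing t with
  | nil => simp [subtreeAt?]
  | cons i a ih =>
    rw [List.cons_append, subtreeAt?, subtreeAt?]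
    cases t.children[i]? with
    | none => simp
    | some c => simp [ih]

lemma isVertex_append {t : OTree} {a b : List ℕ} :
    IsVertex t (a ++ b) ↔ ∃ s, subtreeAt? t a = some s ∧ IsVertex s b := by
  unfold IsVertex
  rw [subtreeAt?_append]
  cases h : subtreeAt? t a with
  | none => simp
  | some s => simp

lemma isVertex_prefix {t : OTree} {a b : List ℕ} (h : IsVertex t (a ++ b)) :
    IsVertex t a := by
  rcases isVertex_append.mp h with ⟨s, hs, _⟩
  unfold IsVertex; rw [hs]; rfl

lemma subtree_height_le {t S : OTree} {p : List ℕ} (h : subtreeAt? t p = some S) :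
    height S + p.length ≤ height t := by
  induction p generalizing t with
  | nil => rw [subtreeAt?] at h; cases h; simp
  | cons i p ih =>
    rw [subtreeAt?] at h
    cases hc : t.children[i]? with
    | none => rw [hc] at h; cases h
    | some c =>
      rw [hc] at h
      have h1 := ih h
      have h2 : height c ≤ heightList t.children :=
        height_mem_le (List.mem_of_getElem? hc)
      cases t with | node cs =>
        rw [height]
        rw [OTree.children] at h2
        simp only [List.length_cons]
        omega

lemma vertex_length_lt_height {t : OTree} {p : List ℕ} (h : IsVertex t p) :
    p.length < height t := by
  unfold IsVertex at h
  cases hs : subtreeAt? t p with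
  | none => rw [hs] at h; cases h
  | some S => have := subtree_height_le hs; have := one_le_height S; omega

lemma maxArity_subtree {t S : OTree} {b : ℕ} {p : List ℕ} (ht : MaxArity t b)
    (h : subtreeAt? t p = some S) : MaxArity S b := by
  intro r s hr
  apply ht (p ++ r)
  rw [subtreeAt?_append, h]
  exact hr

lemma exists_max_height {cs : List OTree} (h : cs ≠ []) :
    ∃ c ∈ cs, height c = heightList cs := by
  induction cs with
  | nil => exact absurd rfl h
  | cons d ds ih =>
    rw [heightList]
    rcases eq_or_ne ds [] with rfl | hne
    · exact ⟨d, List.mem_cons_self, by rw [heightList]; omega⟩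
    · rcases ih hne with ⟨c, hc, hh⟩
      rcases le_or_gt (heightList ds) (height d) with hle | hlt
      · exact ⟨d, List.mem_cons_self, by omega⟩
      · exact ⟨c, List.mem_cons_of_mem _ hc, by omega⟩

lemma exists_deep_leaf (t : OTree) : ∃ ℓ, IsLeaf t ℓ ∧ ℓ.length + 1 = height t := by
  induction t using OTree.rec (motive_2 := fun cs => ∀ c ∈ cs, ∃ ℓ, IsLeaf c ℓ ∧ ℓ.length + 1 = height c) with
  | node cs ih =>
    rcases eq_or_ne cs [] with rfl | hne
    · exact ⟨[], rfl, by rw [height, heightList]; simp⟩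
    · rcases exists_max_height hne with ⟨c, hc, hh⟩
      rcases ih c hc with ⟨ℓ, hℓ, hlen⟩
      rcases List.getElem_of_mem hc with ⟨i, hi, hget⟩
      refine ⟨i :: ℓ, ?_, ?_⟩
      · unfold IsLeaf at hℓ ⊢
        rw [subtreeAt?, OTree.children]
        rw [List.getElem?_eq_getElem hi, hget]
        exact hℓ
      · rw [height]; simp only [List.length_cons]; omega
  | nil =>
    rename_i c hc
    exact absurd hc List.not_mem_nil
  | cons d ds ihd ihds =>
    rename_i c hc
    rcases List.mem_cons.mp hc with rfl | hc
    · exact ihd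
    · exact ihds c hc

lemma uniform_subtree {t S : OTree} {p : List ℕ} (ht : Uniform t)
    (h : subtreeAt? t p = some S) : Uniform S ∧ height S + p.length = height t := by
  have key : ∀ r, IsLeaf S r → r.length + 1 + p.length = height t := by
    intro r hr
    have : IsLeaf t (p ++ r) := by
      unfold IsLeaf at hr ⊢
      rw [subtreeAt?_append, h]; exact hr
    have h1 := ht _ this
    rw [List.length_append] at h1
    omega
  rcases exists_deep_leaf S with ⟨ℓ, hℓ, hlen⟩
  have hS := key ℓ hℓ
  constructor
  · intro r hr
    have := key r hr
    omega
  · omega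

-- ## Section 3 : trunc lemmas

lemma subtreeAt?_trunc {p : List ℕ} {k : ℕ} (t : OTree) (h : p.length ≤ k) :
    subtreeAt? (trunc k t) p = (subtreeAt? t p).map (trunc (k - p.length)) := by
  induction p generalizing k t with
  | nil => simp [subtreeAt?]
  | cons i p ih =>
    cases k with
    | zero => simp at h
    | succ k =>
      rw [subtreeAt?, subtreeAt?, trunc, OTree.children]
      rw [List.getElem?_map]
      cases hc : t.children[i]? with
      | none => simp
      | some c =>
        show subtreeAt? (trunc k c) p = Option.map (trunc (k + 1 - (i :: p).length)) (subtreeAt? c p)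
        have hidx : k + 1 - (i :: p).length = k - p.length := by
          simp only [List.length_cons]; omega
        rw [hidx, ih c (by simpa using h)]

lemma height_trunc (t : OTree) (k : ℕ) : height (trunc k t) = min (k + 1) (height t) := by
  induction t using OTree.rec
    (motive_2 := fun cs => ∀ j, heightList (cs.map (trunc j)) = min (j + 1) (heightList cs))
    generalizing k with
  | node cs ih =>
    cases k with
    | zero =>
      rw [trunc, height, heightList, height]
      omega
    | succ k =>
      rw [trunc, height, OTree.children, ih k, height]
      omega
  | nil =>
    rename_i j
    rw [List.map_nil, heightList]
    omega
  | cons c cs ihc ihcs =>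
    rename_i j
    rw [List.map_cons, heightList, heightList, ihc, ihcs j]
    omega

lemma vertex_trunc_le {p : List ℕ} {k : ℕ} {t : OTree} (h : IsVertex (trunc k t) p) :
    p.length ≤ k := by
  have h1 := vertex_length_lt_height h
  rw [height_trunc] at h1
  omega

lemma isVertex_trunc {p : List ℕ} {k : ℕ} {t : OTree} :
    IsVertex (trunc k t) p ↔ IsVertex t p ∧ p.length ≤ k := by
  constructor
  · intro h
    have hk := vertex_trunc_le h
    refine ⟨?_, hk⟩
    unfold IsVertex at h ⊢
    rw [subtreeAt?_trunc t hk] at h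
    cases hs : subtreeAt? t p with
    | none => rw [hs] at h; simp at h
    | some S => rfl
  · rintro ⟨h, hk⟩
    unfold IsVertex at h ⊢
    rw [subtreeAt?_trunc t hk]
    cases hs : subtreeAt? t p with
    | none => rw [hs] at h; simp at h
    | some S => rfl

lemma uniform_trunc {t : OTree} {k : ℕ} (ht : Uniform t) (hk : k + 1 ≤ height t) :
    Uniform (trunc k t) := by
  intro p hp
  have hv : IsVertex (trunc k t) p := by unfold IsVertex IsLeaf at *; rw [hp]; rfl
  have hk' := vertex_trunc_le hv
  have hvt := (isVertex_trunc.mp hv).1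
  unfold IsLeaf at hp
  rw [subtreeAt?_trunc t hk'] at hp
  cases hs : subtreeAt? t p with
  | none => rw [hs] at hp; simp at hp
  | some S =>
    rw [hs] at hp
    simp only [Option.map_some, Option.some.injEq] at hp
    rw [height_trunc]
    rcases Nat.eq_zero_or_pos (k - p.length) with h0 | hpos
    · omega
    · exfalso
      obtain ⟨j, hj⟩ : ∃ j, k - p.length = j + 1 := ⟨k - p.length - 1, by omega⟩
      rw [hj, trunc] at hp
      have hch : S.children = [] := by
        have := congrArg OTree.children hp
        rw [OTree.children, OTree.children] at this
        exact List.map_eq_nil_iff.mp this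
      have hleaf : IsLeaf t p := by
        unfold IsLeaf
        rw [hs]
        cases S with | node cs =>
          rw [OTree.children] at hch
          rw [hch]
      have := ht p hleaf
      omega

lemma maxArity_trunc {t : OTree} {b k : ℕ} (ht : MaxArity t b) : MaxArity (trunc k t) b := by
  intro p S hp
  have hv : IsVertex (trunc k t) p := by unfold IsVertex; rw [hp]; rfl
  have hk' := vertex_trunc_le hv
  rw [subtreeAt?_trunc t hk'] at hp
  cases hs : subtreeAt? t p with
  | none => rw [hs] at hp; simp at hp
  | some S' =>
    rw [hs] at hp
    simp only [Option.map_some, Option.some.injEq] at hp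
    subst hp
    cases hj : k - p.length with
    | zero => rw [trunc, OTree.children]; simp
    | succ j =>
      rw [trunc, OTree.children, List.length_map]
      exact ht p S' hs

-- ## Section 4 : levelPaths lemmas

lemma subtreeAt?_cons (t : OTree) (i : ℕ) (p : List ℕ) :
    subtreeAt? t (i :: p) = match t.children[i]? with
      | some c => subtreeAt? c p
      | none => none := rfl

lemma isVertex_cons {t : OTree} {i : ℕ} {p : List ℕ} :
    IsVertex t (i :: p) ↔ ∃ c, t.children[i]? = some c ∧ IsVertex c p := by
  unfold IsVertex
  rw [subtreeAt?_cons]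
  cases hc : t.children[i]? with
  | none => simp
  | some c => simp

lemma isVertex_nil (t : OTree) : IsVertex t [] := by unfold IsVertex subtreeAt?; rfl

lemma mem_levelPaths {m : ℕ} {t : OTree} {p : List ℕ} :
    p ∈ levelPaths m t ↔ IsVertex t p ∧ p.length = m := by
  induction m generalizing t p with
  | zero =>
    rw [levelPaths]
    simp only [List.mem_singleton]
    constructor
    · rintro rfl; exact ⟨isVertex_nil t, rfl⟩
    · rintro ⟨_, h⟩; exact List.eq_nil_of_length_eq_zero h
  | succ m ih =>
    rw [levelPaths]
    rw [List.mem_flatten]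
    constructor
    · rintro ⟨l, hl, hp⟩
      rw [List.mem_map] at hl
      rcases hl with ⟨⟨c, i⟩, hic, rfl⟩
      rw [List.mk_mem_zipIdx_iff_getElem?] at hic
      rw [List.mem_map] at hp
      rcases hp with ⟨r, hr, rfl⟩
      rcases ih.mp hr with ⟨hv, hlen⟩
      exact ⟨isVertex_cons.mpr ⟨c, hic, hv⟩, by simp [hlen]⟩
    · rintro ⟨hv, hlen⟩
      cases p with
      | nil => simp at hlen
      | cons i p =>
        rcases isVertex_cons.mp hv with ⟨c, hc, hv'⟩
        refine ⟨(levelPaths m c).map (i :: ·), ?_, ?_⟩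
        · rw [List.mem_map]
          exact ⟨(c, i), List.mk_mem_zipIdx_iff_getElem?.mpr hc, rfl⟩
        · rw [List.mem_map]
          exact ⟨p, ih.mpr ⟨hv', by simpa using hlen⟩, rfl⟩

lemma pairwise_fst_lt_enumFrom {α : Type*} (l : List α) (n : ℕ) :
    List.Pairwise (fun a b => a.2 < b.2) (l.zipIdx n) := by
  induction l generalizing n with
  | nil => exact List.Pairwise.nil
  | cons x l ih =>
    rw [List.zipIdx]
    refine List.Pairwise.cons ?_ (ih (n + 1))
    intro a ha
    have : n + 1 ≤ a.2 := by
      rcases List.mk_mem_zipIdx_iff_le_and_getElem?_sub.mp (by exact ha) with ⟨h1, _⟩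
      exact h1
    omega

lemma nodup_levelPaths (m : ℕ) (t : OTree) : (levelPaths m t).Nodup := by
  induction m generalizing t with
  | zero => simp [levelPaths]
  | succ m ih =>
    rw [levelPaths]
    rw [List.nodup_flatten]
    constructor
    · intro l hl
      rw [List.mem_map] at hl
      rcases hl with ⟨⟨c, i⟩, _, rfl⟩
      exact (ih c).map (fun a b h => by injection h)
    · have hpw : List.Pairwise (fun a b => a.2 < b.2) t.children.zipIdx :=
        pairwise_fst_lt_enumFrom t.children 0
      refine (hpw.map _ ?_)
      rintro ⟨c, i⟩ ⟨d, j⟩ hij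
      rw [List.disjoint_left]
      rintro x hx hx'
      rw [List.mem_map] at hx hx'
      rcases hx with ⟨r, _, rfl⟩
      rcases hx' with ⟨r', _, heq⟩
      injection heq with h1 _
      omega

lemma maxArity_child {t c : OTree} {b i : ℕ} (ht : MaxArity t b)
    (hc : t.children[i]? = some c) : MaxArity c b := by
  apply maxArity_subtree ht (p := [i])
  rw [subtreeAt?_cons, hc]
  rfl

lemma length_levelPaths_le {t : OTree} {b : ℕ} (ht : MaxArity t b) (m : ℕ) :
    (levelPaths m t).length ≤ b ^ m := by
  induction m generalizing t with
  | zero => simp [levelPaths]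
  | succ m ih =>
    rw [levelPaths, List.length_flatten]
    have hb : ∀ x ∈ (t.children.zipIdx.map fun ic => ((levelPaths m ic.1).map (ic.2 :: ·))).map List.length, x ≤ b ^ m := by
      intro x hx
      rw [List.mem_map] at hx
      rcases hx with ⟨l, hl, rfl⟩
      rw [List.mem_map] at hl
      rcases hl with ⟨⟨c, i⟩, hic, rfl⟩
      rw [List.mk_mem_zipIdx_iff_getElem?] at hic
      rw [List.length_map]
      exact ih (maxArity_child ht hic)
    have hlen : ((t.children.zipIdx.map fun ic => ((levelPaths m ic.1).map (ic.2 :: ·))).map List.length).length ≤ b := by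
      rw [List.length_map, List.length_map, List.length_zipIdx]
      exact ht [] t rfl
    calc ((t.children.zipIdx.map fun ic => ((levelPaths m ic.1).map (ic.2 :: ·))).map List.length).sum
        ≤ ((t.children.zipIdx.map fun ic => ((levelPaths m ic.1).map (ic.2 :: ·))).map List.length).length * b ^ m := by
          exact List.sum_le_card_nsmul _ _ hb
      _ ≤ b * b ^ m := Nat.mul_le_mul_right _ hlen
      _ = b ^ (m + 1) := by ring

-- ## Section 5 : cutLevel, gb, vEBAux basic lemmas

lemma vEBAux_succ (ε : ℝ) (fuel : ℕ) (t : OTree) (h : ¬ height t ≤ 1) :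
    vEBAux ε (fuel + 1) t =
      vEBAux ε fuel (trunc (cutLevel ε (height t) - 1) t) ++
        ((levelPaths (cutLevel ε (height t)) t).map fun q =>
          match subtreeAt? t q with
          | some s => (vEBAux ε fuel s).map (q ++ ·)
          | none => []).flatten := by
  rw [vEBAux, if_neg h]

lemma one_le_cutLevel (ε : ℝ) (h : ℕ) : 1 ≤ cutLevel ε h := le_max_right _ _

lemma two_cutLevel_le {ε : ℝ} {h : ℕ} (hε : ε ≤ 1/2) (hh : 2 ≤ h) :
    2 * cutLevel ε h ≤ h := by
  rw [cutLevel]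
  have h1 : ⌊ε * (h : ℝ)⌋₊ ≤ h / 2 := by
    have : ε * (h : ℝ) ≤ (h : ℝ) / 2 := by
      have : ε * (h : ℝ) ≤ (1/2) * (h : ℝ) :=
        mul_le_mul_of_nonneg_right hε (Nat.cast_nonneg _)
      linarith
    calc ⌊ε * (h : ℝ)⌋₊ ≤ ⌊(h : ℝ) / 2⌋₊ := Nat.floor_le_floor this
      _ = h / 2 := by
          rw [show ((h : ℝ) / 2) = (h : ℝ) / ((2 : ℕ) : ℝ) by norm_num]
          rw [Nat.floor_div_natCast, Nat.floor_natCast]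
  omega

lemma cutLevel_le {ε : ℝ} {h : ℕ} (hε : ε ≤ 1/2) (hh : 2 ≤ h) :
    cutLevel ε h ≤ h - 1 := by
  have := two_cutLevel_le hε hh
  omega

lemma cutLevel_ge (ε : ℝ) (h : ℕ) : ε * (h : ℝ) < 2 * (cutLevel ε h : ℕ) := by
  have h1 : ε * (h : ℝ) < ⌊ε * (h : ℝ)⌋₊ + 1 := Nat.lt_floor_add_one _
  have h2 : (⌊ε * (h : ℝ)⌋₊ : ℝ) ≤ (cutLevel ε h : ℝ) := by
    exact_mod_cast Nat.cast_le.mpr (le_max_left _ _)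
  have h3 : (1 : ℝ) ≤ (cutLevel ε h : ℝ) := by
    exact_mod_cast Nat.one_le_cast.mpr (one_le_cutLevel ε h)
  linarith

/-- `gb b h = 1 + b + ... + b^(h-1)`, an upper bound for the number of vertices. -/
def gb (b : ℕ) : ℕ → ℕ
  | 0 => 0
  | h + 1 => 1 + b * gb b h

lemma gb_mono {b : ℕ} (hb : 1 ≤ b) : ∀ {h h' : ℕ}, h ≤ h' → gb b h ≤ gb b h' := by
  intro h h' hle
  induction h' with
  | zero => simp_all
  | succ n ih =>
    rcases Nat.lt_or_ge h (n + 1) with hlt | hge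
    · have := ih (by omega)
      rw [gb]
      calc gb b h ≤ gb b n := this
        _ ≤ b * gb b n := Nat.le_mul_of_pos_left _ (by omega)
        _ ≤ 1 + b * gb b n := by omega
    · have : h = n + 1 := by omega
      subst this; rfl

lemma gb_add (b m k : ℕ) : gb b m + b ^ m * gb b k = gb b (m + k) := by
  induction m with
  | zero => simp [gb]
  | succ m ih =>
    rw [gb, show m + 1 + k = (m + k) + 1 from by omega, gb, ← ih]
    ring

lemma gb_succ_le_pow {b : ℕ} (hb : 2 ≤ b) (h : ℕ) : gb b h + 1 ≤ b ^ h := by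
  induction h with
  | zero => simp [gb]
  | succ n ih =>
    rw [gb, pow_succ]
    calc 1 + b * gb b n + 1 ≤ b * (gb b n + 1) := by nlinarith
      _ ≤ b * b ^ n := Nat.mul_le_mul_left _ ih
      _ = b ^ n * b := by ring

lemma one_le_gb {b : ℕ} (h : ℕ) (hh : 1 ≤ h) : 1 ≤ gb b h := by
  cases h with
  | zero => omega
  | succ n => rw [gb]; omega

lemma mem_vEBAux {ε : ℝ} (hε : ε ≤ 1/2) :
    ∀ {fuel : ℕ} {t : OTree} {w : List ℕ}, height t ≤ fuel →
      (w ∈ vEBAux ε fuel t ↔ IsVertex t w) := by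
  intro fuel
  induction fuel with
  | zero => intro t w h; have := one_le_height t; omega
  | succ fuel ih =>
    intro t w hfuel
    rcases le_or_gt (height t) 1 with h1 | h1
    · -- t = node []
      have hh : height t = 1 := le_antisymm h1 (one_le_height t)
      obtain ⟨cs⟩ := t
      rw [height] at hh
      have : cs = [] := heightList_eq_zero (by omega)
      subst this
      rw [vEBAux, if_pos h1]
      constructor
      · intro hw
        rcases List.mem_singleton.mp hw with rfl
        exact isVertex_nil _
      · intro hw
        cases w with
        | nil => exact List.mem_singleton.mpr rfl
        | cons i p =>
          exfalso
          rcases isVertex_cons.mp hw with ⟨c, hc, _⟩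
          rw [OTree.children] at hc
          simp at hc
      
    · have hht : 2 ≤ height t := h1
      set m := cutLevel ε (height t) with hm
      have hm1 : 1 ≤ m := one_le_cutLevel ε _
      have hmle : m ≤ height t - 1 := cutLevel_le hε hht
      rw [vEBAux_succ ε fuel t (by omega)]
      rw [List.mem_append]
      have hT0 : height (trunc (m - 1) t) = m := by
        rw [height_trunc]; omega
      have htop : w ∈ vEBAux ε fuel (trunc (m - 1) t) ↔ IsVertex t w ∧ w.length ≤ m - 1 := by
        rw [ih (by omega), isVertex_trunc]
      have hbot : (w ∈ ((levelPaths m t).map fun q =>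
          match subtreeAt? t q with
          | some s => (vEBAux ε fuel s).map (q ++ ·)
          | none => []).flatten) ↔ IsVertex t w ∧ m ≤ w.length := by
        rw [List.mem_flatten]
        constructor
        · rintro ⟨l, hl, hw⟩
          rw [List.mem_map] at hl
          rcases hl with ⟨q, hq, rfl⟩
          rcases mem_levelPaths.mp hq with ⟨hqv, hqlen⟩
          cases hs : subtreeAt? t q with
          | none => rw [hs] at hw; cases hw
          | some S =>
            rw [hs] at hw
            rw [List.mem_map] at hw
            rcases hw with ⟨r, hr, rfl⟩
            have hhS : height S + q.length ≤ height t := subtree_height_le hs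
            have hrv : IsVertex S r := (ih (by omega)).mp hr
            constructor
            · exact isVertex_append.mpr ⟨S, hs, hrv⟩
            · rw [List.length_append]; omega
        · rintro ⟨hv, hlen⟩
          set q := w.take m with hq
          have hqw : q ++ w.drop m = w := List.take_append_drop m w
          have hqv : IsVertex t q := by
            rw [← hqw] at hv; exact isVertex_prefix hv
          have hqlen : q.length = m := by
            rw [hq, List.length_take]; omega
          rcases isVertex_append.mp (by rw [hqw]; exact hv) with ⟨S, hs, hrv⟩
          refine ⟨(vEBAux ε fuel S).map (q ++ ·), ?_, ?_⟩
          · rw [List.mem_map]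
            refine ⟨q, mem_levelPaths.mpr ⟨hqv, hqlen⟩, ?_⟩
            rw [hs]
          · rw [List.mem_map]
            have hhS : height S + q.length ≤ height t := subtree_height_le hs
            exact ⟨w.drop m, (ih (by omega)).mpr hrv, hqw⟩
      rw [htop, hbot]
      constructor
      · rintro (⟨h, _⟩ | ⟨h, _⟩) <;> exact h
      · intro h
        rcases le_or_gt w.length (m - 1) with hc | hc
        · exact Or.inl ⟨h, hc⟩
        · exact Or.inr ⟨h, by omega⟩

lemma length_vEBAux_le {ε : ℝ} {b : ℕ} (hε : ε ≤ 1/2) (hb : 2 ≤ b) :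
    ∀ {fuel : ℕ} {t : OTree}, MaxArity t b → height t ≤ fuel →
      (vEBAux ε fuel t).length ≤ gb b (height t) := by
  intro fuel
  induction fuel with
  | zero => intro t _ h; have := one_le_height t; omega
  | succ fuel ih =>
    intro t ht hfuel
    rcases le_or_gt (height t) 1 with h1 | h1
    · have hh : height t = 1 := le_antisymm h1 (one_le_height t)
      rw [vEBAux, if_pos h1, hh]
      simp [gb]
    · have hht : 2 ≤ height t := h1
      set m := cutLevel ε (height t) with hm
      have hm1 : 1 ≤ m := one_le_cutLevel ε _
      have hmle : m ≤ height t - 1 := cutLevel_le hε hht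
      rw [vEBAux_succ ε fuel t (by omega)]
      rw [List.length_append]
      have hT0 : height (trunc (m - 1) t) = m := by
        rw [height_trunc]; omega
      have htop : (vEBAux ε fuel (trunc (m - 1) t)).length ≤ gb b m := by
        have h := ih (t := trunc (m - 1) t) (maxArity_trunc ht) (by rw [hT0]; omega)
        rwa [hT0] at h
      have hbot : (((levelPaths m t).map fun q =>
          match subtreeAt? t q with
          | some s => (vEBAux ε fuel s).map (q ++ ·)
          | none => []).flatten).length ≤ b ^ m * gb b (height t - m) := by
        rw [List.length_flatten]
        have hbound : ∀ x ∈ ((levelPaths m t).map fun q =>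
            match subtreeAt? t q with
            | some s => (vEBAux ε fuel s).map (q ++ ·)
            | none => []).map List.length, x ≤ gb b (height t - m) := by
          intro x hx
          rw [List.mem_map] at hx
          rcases hx with ⟨l, hl, rfl⟩
          rw [List.mem_map] at hl
          rcases hl with ⟨q, hq, rfl⟩
          rcases mem_levelPaths.mp hq with ⟨hqv, hqlen⟩
          cases hs : subtreeAt? t q with
          | none => simp
          | some S =>
            simp only [List.length_map]
            have hhS : height S + q.length ≤ height t := subtree_height_le hs
            calc (vEBAux ε fuel S).length ≤ gb b (height S) :=
                  ih (maxArity_subtree ht hs) (by omega)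
              _ ≤ gb b (height t - m) := gb_mono (by omega) (by omega)
        calc (((levelPaths m t).map fun q =>
            match subtreeAt? t q with
            | some s => (vEBAux ε fuel s).map (q ++ ·)
            | none => []).map List.length).sum
            ≤ _ * gb b (height t - m) := List.sum_le_card_nsmul _ _ hbound
          _ ≤ b ^ m * gb b (height t - m) := by
              apply Nat.mul_le_mul_right
              rw [List.length_map, List.length_map]
              exact length_levelPaths_le ht m
      calc (vEBAux ε fuel (trunc (m - 1) t)).length + _ ≤ gb b m + b ^ m * gb b (height t - m) :=
            Nat.add_le_add htop hbot
        _ = gb b (m + (height t - m)) := gb_add b m _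
        _ = gb b (height t) := by congr 1; omega

-- ## Section 6 : indexOf shift lemmas

section IndexOf
variable {α : Type*} [BEq α] [LawfulBEq α]

lemma idx_cons_self (a : α) (l : List α) : (a :: l).idxOf a = 0 := by
  rw [List.idxOf_cons]
  simp

lemma idx_cons_ne {a b : α} (l : List α) (h : b ≠ a) :
    (b :: l).idxOf a = l.idxOf a + 1 := by
  rw [List.idxOf_cons]
  have : (b == a) = false := beq_false_of_ne h
  rw [this]
  rfl

lemma idx_append_of_mem {a : α} {l₁ : List α} (l₂ : List α) (h : a ∈ l₁) :
    (l₁ ++ l₂).idxOf a = l₁.idxOf a := by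
  induction l₁ with
  | nil => cases h
  | cons x l ih =>
    rcases eq_or_ne x a with rfl | hne
    · rw [List.cons_append, idx_cons_self, idx_cons_self]
    · rw [List.cons_append, idx_cons_ne _ hne, idx_cons_ne _ hne,
        ih (by rcases List.mem_cons.mp h with rfl | h; exact absurd rfl hne; exact h)]

lemma idx_append_of_not_mem {a : α} {l₁ : List α} (l₂ : List α) (h : a ∉ l₁) :
    (l₁ ++ l₂).idxOf a = l₁.length + l₂.idxOf a := by
  induction l₁ with
  | nil => simp
  | cons x l ih =>
    have hne : x ≠ a := fun e => h (e ▸ List.mem_cons_self)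
    rw [List.cons_append, idx_cons_ne _ hne, ih (fun hm => h (List.mem_cons_of_mem _ hm))]
    simp only [List.length_cons]
    omega

lemma idx_lt_length_of_mem {a : α} {l : List α} (h : a ∈ l) :
    l.idxOf a < l.length := by
  induction l with
  | nil => cases h
  | cons x l ih =>
    rcases eq_or_ne x a with rfl | hne
    · rw [idx_cons_self]; simp
    · rw [idx_cons_ne _ hne, List.length_cons]
      have : a ∈ l := by rcases List.mem_cons.mp h with rfl | h; exact absurd rfl hne; exact h
      exact Nat.succ_lt_succ (ih this)

end IndexOf

lemma indexOf_map_inj {α β : Type*} [BEq α] [LawfulBEq α] [BEq β] [LawfulBEq β] {g : α → β}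
    (hg : Function.Injective g) (l : List α) (x : α) :
    (l.map g).idxOf (g x) = l.idxOf x := by
  induction l with
  | nil => rfl
  | cons a l ih =>
    rw [List.map_cons]
    rcases eq_or_ne a x with rfl | hne
    · rw [idx_cons_self, idx_cons_self]
    · rw [idx_cons_ne _ (fun h => hne (hg h)), idx_cons_ne _ hne, ih]

lemma top_indexOf {ε : ℝ} {fuel : ℕ} {t : OTree} (hht : ¬ height t ≤ 1) {w : List ℕ}
    (hw : w ∈ vEBAux ε fuel (trunc (cutLevel ε (height t) - 1) t)) :
    (vEBAux ε (fuel + 1) t).idxOf w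
      = (vEBAux ε fuel (trunc (cutLevel ε (height t) - 1) t)).idxOf w := by
  rw [vEBAux_succ ε fuel t hht]
  exact idx_append_of_mem _ hw

lemma shift_lemma {ε : ℝ} (hε : ε ≤ 1/2) {fuel : ℕ} {t : OTree} {qm : List ℕ} {S : OTree}
    (hht : 2 ≤ height t) (hfuel : height t ≤ fuel + 1)
    (hqm : qm ∈ levelPaths (cutLevel ε (height t)) t)
    (hS : subtreeAt? t qm = some S) :
    ∃ c : ℕ, ∀ w' : List ℕ, IsVertex S w' →
      (vEBAux ε (fuel + 1) t).idxOf (qm ++ w') = c + (vEBAux ε fuel S).idxOf w' := by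
  set m := cutLevel ε (height t) with hm
  have hm1 : 1 ≤ m := one_le_cutLevel ε _
  have hmle : m ≤ height t - 1 := cutLevel_le hε hht
  rcases mem_levelPaths.mp hqm with ⟨hqv, hqlen⟩
  have hhS : height S + qm.length ≤ height t := subtree_height_le hS
  set f : List ℕ → List (List ℕ) := fun q =>
    match subtreeAt? t q with
    | some s => (vEBAux ε fuel s).map (q ++ ·)
    | none => [] with hf
  rcases List.append_of_mem hqm with ⟨P1, P2, hsplit⟩
  have hnodup := nodup_levelPaths m t
  rw [hsplit, List.nodup_append'] at hnodup
  have hqmP1 : qm ∉ P1 := fun h => hnodup.2.2 h (List.mem_cons_self)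
  have hP1sub : ∀ q ∈ P1, q ∈ levelPaths m t := by
    intro q hq; rw [hsplit]; exact List.mem_append_left _ hq
  have hsplit2 : vEBAux ε (fuel + 1) t =
      (vEBAux ε fuel (trunc (m - 1) t) ++ ((P1.map f).flatten))
        ++ (f qm ++ (P2.map f).flatten) := by
    rw [vEBAux_succ ε fuel t (by omega), hsplit]
    rw [List.map_append, List.map_cons, List.flatten_append, List.flatten_cons]
    simp [List.append_assoc]
    rfl
  refine ⟨(vEBAux ε fuel (trunc (m - 1) t) ++ ((P1.map f).flatten)).length, ?_⟩
  intro w' hw'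
  have hwmem : w' ∈ vEBAux ε fuel S := by
    rw [mem_vEBAux hε (by omega)]; exact hw'
  have hnotA : qm ++ w' ∉ vEBAux ε fuel (trunc (m - 1) t) ++ ((P1.map f).flatten) := by
    intro hmem
    rcases List.mem_append.mp hmem with htop | hflat
    · have hT0 : height (trunc (m - 1) t) = m := by rw [height_trunc]; omega
      have := mem_vEBAux hε (fuel := fuel) (t := trunc (m - 1) t) (by omega) |>.mp htop
      have hlen := vertex_length_lt_height this
      rw [hT0, List.length_append] at hlen
      omega
    · rw [List.mem_flatten] at hflat
      rcases hflat with ⟨l, hl, hx⟩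
      rw [List.mem_map] at hl
      rcases hl with ⟨q, hq, rfl⟩
      rcases mem_levelPaths.mp (hP1sub q hq) with ⟨_, hqlen'⟩
      have hx' : qm ++ w' ∈ (match subtreeAt? t q with
          | some s => (vEBAux ε fuel s).map (q ++ ·)
          | none => ([] : List (List ℕ))) := hx
      cases hs' : subtreeAt? t q with
      | none => rw [hs'] at hx'; cases hx'
      | some S' =>
        rw [hs'] at hx'
        rename' hx' => hx
        rw [List.mem_map] at hx
        rcases hx with ⟨r, _, heq⟩
        have h1 : (q ++ r).take m = q := by
          rw [← hqlen']; exact List.take_left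
        have h2 : (qm ++ w').take m = qm := by
          rw [← hqlen]; exact List.take_left
        rw [heq, h2] at h1
        exact hqmP1 (h1 ▸ hq)
  rw [hsplit2, idx_append_of_not_mem (f qm ++ (P2.map f).flatten) hnotA]
  congr 1
  have hfqm : f qm = (vEBAux ε fuel S).map (qm ++ ·) := by rw [hf]; simp only; rw [hS]
  rw [hfqm]
  have hmemmap : qm ++ w' ∈ (vEBAux ε fuel S).map (qm ++ ·) :=
    List.mem_map.mpr ⟨w', hwmem, rfl⟩
  rw [idx_append_of_mem _ hmemmap]
  exact indexOf_map_inj (fun a b h => List.append_cancel_left h) _ _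

-- ## Section 7 : the main chain lemma

lemma main_chain {ε : ℝ} (hε0 : 0 < ε) (hε : ε ≤ 1/2) {b : ℕ} (hb : 2 ≤ b) {H : ℕ} (hH : 1 ≤ H) :
    ∀ (fuel : ℕ) (t : OTree), Uniform t → MaxArity t b → height t ≤ fuel →
    ∀ q : List ℕ, IsVertex t q →
    ∃ (k : ℕ) (ii dd hh : ℕ → ℕ),
      1 ≤ k ∧ dd 0 = 0 ∧
      (∀ j, j + 1 < k → dd (j + 1) = dd j + hh j) ∧
      (∀ j, j < k → 1 ≤ hh j ∧ hh j ≤ H ∧ dd j ≤ q.length ∧ dd j + hh j ≤ height t) ∧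
      q.length < dd (k - 1) + hh (k - 1) ∧
      (∀ j, j < k → ε * (H + 1) ≤ 2 * (hh j : ℝ) ∨ (j = 0 ∧ height t ≤ H ∧ hh j = height t)) ∧
      (∀ j, j < k → ∀ r : List ℕ, IsVertex t (q.take (dd j) ++ r) → r.length < hh j →
        ii j ≤ (vEBAux ε fuel t).idxOf (q.take (dd j) ++ r) ∧
        (vEBAux ε fuel t).idxOf (q.take (dd j) ++ r) < ii j + gb b (hh j)) := by
  intro fuel
  induction fuel with
  | zero => intro t _ _ hf; have := one_le_height t; omega
  | succ fuel ih =>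
    intro t hu ha hfuel q hq
    rcases le_or_gt (height t) H with hcase | hcase
    · -- base case : whole tree is one block
      refine ⟨1, fun _ => 0, fun _ => 0, fun _ => height t, le_refl 1, rfl, ?_, ?_, ?_, ?_, ?_⟩
      · intro j hj; exact absurd hj (by omega)
      · intro j hj
        exact ⟨one_le_height t, hcase, Nat.zero_le _, by simp⟩
      · simpa using vertex_length_lt_height hq
      · intro j hj; right; exact ⟨by omega, hcase, rfl⟩
      · intro j hj r hr hrlen
        rw [List.take_zero, List.nil_append] at hr ⊢
        have hmem : r ∈ vEBAux ε (fuel + 1) t := (mem_vEBAux hε hfuel).mpr hr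
        refine ⟨Nat.zero_le _, ?_⟩
        calc (vEBAux ε (fuel + 1) t).idxOf r < (vEBAux ε (fuel + 1) t).length :=
              idx_lt_length_of_mem hmem
          _ ≤ gb b (height t) := length_vEBAux_le hε hb ha hfuel
          _ = 0 + gb b (height t) := by omega
    · -- recursive case
      have hht : 2 ≤ height t := by omega
      set m := cutLevel ε (height t) with hmdef
      have hm1 : 1 ≤ m := one_le_cutLevel ε _
      have hmle : m ≤ height t - 1 := cutLevel_le hε hht
      have hm2 : 2 * m ≤ height t := two_cutLevel_le hε hht
      have hmlow : ε * (H + 1) ≤ 2 * (m : ℝ) := by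
        have h1 : ε * ((height t : ℕ) : ℝ) < 2 * (m : ℝ) := cutLevel_ge ε (height t)
        have h2 : ε * (H + 1) ≤ ε * ((height t : ℕ) : ℝ) := by
          apply mul_le_mul_of_nonneg_left _ (le_of_lt hε0)
          have : (H : ℝ) + 1 ≤ (height t : ℝ) := by
            exact_mod_cast (show H + 1 ≤ height t by omega)
          linarith
        linarith
      have hT0u : Uniform (trunc (m - 1) t) := uniform_trunc hu (by omega)
      have hT0a : MaxArity (trunc (m - 1) t) b := maxArity_trunc ha
      have hT0h : height (trunc (m - 1) t) = m := by rw [height_trunc]; omega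
      have hT0fuel : height (trunc (m - 1) t) ≤ fuel := by omega
      rcases lt_or_ge q.length m with hql | hql
      · -- branch entirely inside the top tree
        have hqT0 : IsVertex (trunc (m - 1) t) q := isVertex_trunc.mpr ⟨hq, by omega⟩
        rcases ih (trunc (m - 1) t) hT0u hT0a hT0fuel q hqT0 with
          ⟨k, ii, dd, hh, hk, hdd0, hcons, hblk, hlast, hlow, hpos⟩
        refine ⟨k, ii, dd, hh, hk, hdd0, hcons, ?_, hlast, ?_, ?_⟩
        · intro j hj
          rcases hblk j hj with ⟨h1, h2, h3, h4⟩
          exact ⟨h1, h2, h3, by omega⟩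
        · intro j hj
          rcases hlow j hj with h | ⟨hj0, hhT0, hhj⟩
          · exact Or.inl h
          · left
            rw [hT0h] at hhj
            rw [hhj]
            exact hmlow
        · intro j hj r hr hrlen
          rcases hblk j hj with ⟨h1, h2, h3, h4⟩
          have hlen : (q.take (dd j) ++ r).length ≤ m - 1 := by
            rw [List.length_append, List.length_take]
            omega
          have hrT0 : IsVertex (trunc (m - 1) t) (q.take (dd j) ++ r) :=
            isVertex_trunc.mpr ⟨hr, hlen⟩
          have := hpos j hj r hrT0 hrlen
          have hmem : (q.take (dd j) ++ r) ∈ vEBAux ε fuel (trunc (m - 1) t) :=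
            (mem_vEBAux hε hT0fuel).mpr hrT0
          rw [top_indexOf (by omega) hmem]
          exact this
      · -- branch crosses the cut
        have hq' : IsVertex (trunc (m - 1) t) (q.take (m - 1)) := by
          apply isVertex_trunc.mpr
          refine ⟨?_, by rw [List.length_take]; omega⟩
          have : q.take (m - 1) ++ q.drop (m - 1) = q := List.take_append_drop _ q
          rw [← this] at hq
          exact isVertex_prefix hq
        have hq'len : (q.take (m - 1)).length = m - 1 := by
          rw [List.length_take]; omega
        rcases ih (trunc (m - 1) t) hT0u hT0a hT0fuel (q.take (m - 1)) hq' with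
          ⟨k₀, ii₀, dd₀, hh₀, hk₀, hdd0₀, hcons₀, hblk₀, hlast₀, hlow₀, hpos₀⟩
        rw [hT0h] at hblk₀
        rw [hq'len] at hlast₀
        -- the bottom subtree
        have hqm : IsVertex t (q.take m) := by
          have : q.take m ++ q.drop m = q := List.take_append_drop _ q
          rw [← this] at hq
          exact isVertex_prefix hq
        have hqmlen : (q.take m).length = m := by rw [List.length_take]; omega
        obtain ⟨S, hS⟩ : ∃ S, subtreeAt? t (q.take m) = some S := by
          unfold IsVertex at hqm
          cases hs : subtreeAt? t (q.take m) with
          | none => rw [hs] at hqm; cases hqm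
          | some S => exact ⟨S, rfl⟩
        have hSu : Uniform S := (uniform_subtree hu hS).1
        have hSh : height S + m = height t := by
          have := (uniform_subtree hu hS).2
          omega
        have hSa : MaxArity S b := maxArity_subtree ha hS
        have hq'' : IsVertex S (q.drop m) := by
          have hqq : q.take m ++ q.drop m = q := List.take_append_drop _ q
          rcases isVertex_append.mp (by rw [hqq]; exact hq) with ⟨S', hS', hv⟩
          rw [hS] at hS'
          injection hS' with h
          exact h ▸ hv
        have hq''len : (q.drop m).length = q.length - m := by rw [List.length_drop]
        rcases ih S hSu hSa (by omega) (q.drop m) hq'' with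
          ⟨k₁, ii₁, dd₁, hh₁, hk₁, hdd0₁, hcons₁, hblk₁, hlast₁, hlow₁, hpos₁⟩
        -- the index shift for the bottom subtree
        have hqmlvl : q.take m ∈ levelPaths m t := mem_levelPaths.mpr ⟨hqm, hqmlen⟩
        rcases shift_lemma hε hht hfuel hqmlvl hS with ⟨c, hc⟩
        -- top chain ends exactly at depth m
        have htopend : dd₀ (k₀ - 1) + hh₀ (k₀ - 1) = m := by
          have h1 := hlast₀
          have h2 := (hblk₀ (k₀ - 1) (by omega)).2.2.2
          omega
        -- assemble
        refine ⟨k₀ + k₁,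
          (fun j => if j < k₀ then ii₀ j else c + ii₁ (j - k₀)),
          (fun j => if j < k₀ then dd₀ j else m + dd₁ (j - k₀)),
          (fun j => if j < k₀ then hh₀ j else hh₁ (j - k₀)),
          by omega, ?_, ?_, ?_, ?_, ?_, ?_⟩
        · simp only [if_pos (show 0 < k₀ by omega)]; exact hdd0₀
        · intro j hj
          rcases lt_trichotomy (j + 1) k₀ with h | h | h
          · simp only [if_pos h, if_pos (show j < k₀ by omega)]
            exact hcons₀ j h
          · have hjk : j = k₀ - 1 := by omega
            simp only [if_neg (show ¬ j + 1 < k₀ by omega), if_pos (show j < k₀ by omega)]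
            rw [show j + 1 - k₀ = 0 by omega, hdd0₁, hjk, htopend]
            omega
          · simp only [if_neg (show ¬ j + 1 < k₀ by omega), if_neg (show ¬ j < k₀ by omega)]
            rw [show j + 1 - k₀ = (j - k₀) + 1 by omega]
            rw [hcons₁ (j - k₀) (by omega)]
            omega
        · intro j hj
          by_cases h : j < k₀
          · simp only [if_pos h]
            rcases hblk₀ j h with ⟨h1, h2, h3, h4⟩
            refine ⟨h1, h2, by omega, by omega⟩
          · simp only [if_neg h]
            rcases hblk₁ (j - k₀) (by omega) with ⟨h1, h2, h3, h4⟩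
            refine ⟨h1, h2, by omega, by omega⟩
        · have hne : ¬ (k₀ + k₁ - 1 < k₀) := by omega
          simp only [if_neg hne]
          rw [show k₀ + k₁ - 1 - k₀ = k₁ - 1 by omega]
          omega
        · intro j hj
          by_cases h : j < k₀
          · simp only [if_pos h]
            rcases hlow₀ j h with h' | ⟨hj0, hhT0, hhj⟩
            · exact Or.inl h'
            · left
              rw [hT0h] at hhj
              rw [hhj]
              exact hmlow
          · simp only [if_neg h]
            rcases hlow₁ (j - k₀) (by omega) with h' | ⟨hj0, hhS', hhj⟩
            · exact Or.inl h'
            · left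
              rw [hhj]
              have hc1 : (H : ℝ) + 1 ≤ 2 * (height S : ℝ) := by
                exact_mod_cast (show H + 1 ≤ 2 * height S by omega)
              have hc2 : ε * ((H : ℝ) + 1) ≤ (1/2) * ((H : ℝ) + 1) := by
                apply mul_le_mul_of_nonneg_right hε
                positivity
              linarith
        · intro j hj r hr hrlen
          by_cases h : j < k₀
          · simp only [if_pos h] at hr hrlen ⊢
            rcases hblk₀ j h with ⟨h1, h2, h3, h4⟩
            have hdlem : q.take (dd₀ j) = (q.take (m - 1)).take (dd₀ j) := by
              rw [List.take_take, min_eq_left (by omega)]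
            have hlen : ((q.take (m - 1)).take (dd₀ j) ++ r).length ≤ m - 1 := by
              rw [List.length_append, List.length_take, hq'len]
              omega
            rw [hdlem] at hr ⊢
            have hrT0 : IsVertex (trunc (m - 1) t) ((q.take (m - 1)).take (dd₀ j) ++ r) :=
              isVertex_trunc.mpr ⟨hr, hlen⟩
            have := hpos₀ j h r hrT0 hrlen
            have hmem : ((q.take (m - 1)).take (dd₀ j) ++ r) ∈ vEBAux ε fuel (trunc (m - 1) t) :=
              (mem_vEBAux hε hT0fuel).mpr hrT0
            rw [top_indexOf (by omega) hmem]
            exact this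
          · simp only [if_neg h] at hr hrlen ⊢
            set j' := j - k₀ with hj'
            have hsplitq : q.take (m + dd₁ j') = q.take m ++ (q.drop m).take (dd₁ j') :=
              List.take_add
            rw [hsplitq, List.append_assoc] at hr ⊢
            set w' := (q.drop m).take (dd₁ j') ++ r with hw'
            have hvw' : IsVertex S w' := by
              rcases isVertex_append.mp hr with ⟨S', hS', hv⟩
              rw [hS] at hS'
              injection hS' with hSS
              exact hSS ▸ hv
            have hvSr : IsVertex S ((q.drop m).take (dd₁ j') ++ r) := hvw'
            have hib := hpos₁ j' (by omega) r hvSr hrlen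
            rw [← hw'] at hib
            rw [hc w' hvw']
            exact ⟨by omega, by omega⟩

-- ## Section 8 : the main theorem

lemma gb_le_B {b B H : ℕ} (hb : 2 ≤ b) (hB : 2 ≤ B) (hHdef : H = max (Nat.log b B) 1)
    {h : ℕ} (h1 : 1 ≤ h) (h2 : h ≤ H) : gb b h ≤ B := by
  rcases Nat.eq_zero_or_pos (Nat.log b B) with hlog | hlog
  · have : H = 1 := by rw [hHdef, hlog]; simp
    have : h = 1 := by omega
    subst this
    show gb b (0 + 1) ≤ B
    rw [gb, gb]
    omega
  · have hH : H = Nat.log b B := by rw [hHdef]; omega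
    calc gb b h ≤ gb b H := gb_mono (by omega) h2
      _ ≤ b ^ H - 1 := by have := gb_succ_le_pow hb H; omega
      _ ≤ B - 1 := by
          have : b ^ H ≤ B := by
            rw [hH]
            exact Nat.pow_log_le_self b (by omega)
          omega
      _ ≤ B := by omega

lemma logb_le_H_succ {b B H : ℕ} (hb : 2 ≤ b) (hB : 2 ≤ B) (hHdef : H = max (Nat.log b B) 1) :
    Real.logb b B ≤ (H : ℝ) + 1 := by
  have hb1 : (1 : ℝ) < (b : ℝ) := by exact_mod_cast (show 1 < b by omega)
  have hpow : B < b ^ (H + 1) := by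
    calc B < b ^ (Nat.log b B + 1) := Nat.lt_pow_succ_log_self (by omega) B
      _ ≤ b ^ (H + 1) := Nat.pow_le_pow_right (by omega) (by omega)
  have hcast : (B : ℝ) ≤ ((b : ℝ)) ^ (H + 1) := by
    exact_mod_cast le_of_lt hpow
  calc Real.logb b B ≤ Real.logb b ((b : ℝ) ^ (H + 1)) := by
        apply Real.logb_le_logb_of_le hb1 (by exact_mod_cast (show 0 < B by omega)) hcast
    _ = ((H + 1 : ℕ) : ℝ) * Real.logb b b := by rw [Real.logb_pow]
    _ = (H : ℝ) + 1 := by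
        rw [Real.logb_self_eq_one hb1]
        push_cast
        ring

theorem branch_segment_block_cover' :
    ∃ C : ℝ, 0 < C ∧
      ∀ (ε : ℝ), 0 < ε → ε ≤ 1/2 →
      ∀ (t : OTree), Uniform t →
      ∀ (b : ℕ), 2 ≤ b → MaxArity t b →
      ∀ (B : ℕ), 2 ≤ B →
      ∀ (q : List ℕ), IsVertex t q →
      ∀ (s : ℕ), s ≤ q.length →
        ∃ I : Finset ℕ,
          (I.card : ℝ) ≤ C * ((s : ℝ) / (ε * Real.logb b B) + 1) ∧
          ∀ n, q.length - s ≤ n → n ≤ q.length →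
            ∃ a ∈ I, a ≤ pos ε t (q.take n) ∧ pos ε t (q.take n) < a + B := by
  refine ⟨2, by norm_num, ?_⟩
  intro ε hε0 hε t hu b hb ha B hB q hq s hs
  set H := max (Nat.log b B) 1 with hHdef
  have hH : 1 ≤ H := le_max_right _ _
  rcases main_chain hε0 hε hb hH (height t) t hu ha le_rfl q hq with
    ⟨k, ii, dd, hh, hk, hdd0, hcons, hblk, hlast, hlow, hpos⟩
  have hlogpos : 0 < Real.logb b B :=
    Real.logb_pos (by exact_mod_cast (show 1 < b by omega))
      (by exact_mod_cast (show 1 < B by omega))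
  have hdenpos : 0 < ε * Real.logb b B := mul_pos hε0 hlogpos
  have hsnonneg : (0 : ℝ) ≤ (s : ℝ) / (ε * Real.logb b B) :=
    div_nonneg (Nat.cast_nonneg _) (le_of_lt hdenpos)
  set Lo := q.length - s with hLo
  set F := (Finset.range k).filter (fun j => Lo < dd j + hh j) with hF
  refine ⟨F.image ii, ?_, ?_⟩
  · -- cardinality bound
    have hkF : k - 1 ∈ F := by
      rw [hF, Finset.mem_filter, Finset.mem_range]
      refine ⟨by omega, by omega⟩
    have hFne : F.Nonempty := ⟨k - 1, hkF⟩
    set j₀ := F.min' hFne with hj₀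
    have hj₀F : j₀ ∈ F := Finset.min'_mem F hFne
    have hj₀k : j₀ < k := by
      have := (Finset.mem_filter.mp hj₀F).1
      exact Finset.mem_range.mp this
    have hj₀lo : Lo < dd j₀ + hh j₀ := (Finset.mem_filter.mp hj₀F).2
    have hcard : F.card ≤ k - j₀ := by
      have hsub : F ⊆ Finset.Ico j₀ k := by
        intro j hj
        rw [Finset.mem_Ico]
        exact ⟨Finset.min'_le F j hj, Finset.mem_range.mp (Finset.mem_filter.mp hj).1⟩
      calc F.card ≤ (Finset.Ico j₀ k).card := Finset.card_le_card hsub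
        _ = k - j₀ := Nat.card_Ico j₀ k
    have hcard2 : (F.image ii).card ≤ k - j₀ := le_trans (Finset.card_image_le) hcard
    rcases le_or_gt (k - j₀) 2 with hsmall | hbig
    · calc ((F.image ii).card : ℝ) ≤ 2 := by exact_mod_cast le_trans hcard2 hsmall
        _ ≤ 2 * ((s : ℝ) / (ε * Real.logb b B) + 1) := by nlinarith
    · -- at least three blocks meet the range
      have hstep : ∀ d : ℕ, j₀ + 1 + d ≤ k - 1 →
          (dd (j₀ + 1) : ℝ) + d * (ε * ((H : ℝ) + 1) / 2) ≤ (dd (j₀ + 1 + d) : ℝ) := by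
        intro d
        induction d with
        | zero => intro _; simp
        | succ d ihd =>
          intro hd
          have hd' : j₀ + 1 + d ≤ k - 1 := by omega
          have h1 := ihd hd'
          have hjk : (j₀ + 1 + d) + 1 < k := by omega
          have h2 := hcons (j₀ + 1 + d) hjk
          have h3 : ε * ((H : ℝ) + 1) ≤ 2 * (hh (j₀ + 1 + d) : ℝ) := by
            rcases hlow (j₀ + 1 + d) (by omega) with h | ⟨h0, _⟩
            · exact_mod_cast h
            · omega
          have heq : j₀ + 1 + (d + 1) = (j₀ + 1 + d) + 1 := by omega
          rw [heq, h2]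
          push_cast
          linarith
      have hiend : j₀ + 1 + (k - 2 - j₀) = k - 1 := by omega
      have hsup := hstep (k - 2 - j₀) (by omega)
      rw [hiend] at hsup
      have hddlast : dd (k - 1) ≤ q.length := (hblk (k - 1) (by omega)).2.2.1
      have hdd1 : q.length - s + 1 ≤ dd (j₀ + 1) := by
        have := hcons j₀ (by omega)
        omega
      have hkey : ((k - 2 - j₀ : ℕ) : ℝ) * (ε * ((H : ℝ) + 1) / 2) ≤ (s : ℝ) := by
        have c1 : ((q.length - s + 1 : ℕ) : ℝ) ≤ (dd (j₀ + 1) : ℝ) := by exact_mod_cast hdd1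
        have c2 : ((dd (k - 1) : ℕ) : ℝ) ≤ (q.length : ℝ) := by exact_mod_cast hddlast
        have c3 : ((q.length - s + 1 : ℕ) : ℝ) = (q.length : ℝ) - (s : ℝ) + 1 := by
          push_cast [Nat.cast_sub hs]
          ring
        rw [c3] at c1
        linarith
      have hγpos : (0:ℝ) < ε * ((H : ℝ) + 1) / 2 := by positivity
      have hile : ((k - 2 - j₀ : ℕ) : ℝ) ≤ (s : ℝ) / (ε * ((H : ℝ) + 1) / 2) := by
        rw [le_div_iff₀ hγpos]
        exact hkey
      have hHle : Real.logb b B ≤ (H : ℝ) + 1 := logb_le_H_succ hb hB hHdef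
      have hdiv1 : (s : ℝ) / (ε * ((H : ℝ) + 1)) ≤ (s : ℝ) / (ε * Real.logb b B) := by
        apply div_le_div_of_nonneg_left (Nat.cast_nonneg s) hdenpos
        exact mul_le_mul_of_nonneg_left hHle hε0.le
      have hdivle : (s : ℝ) / (ε * ((H : ℝ) + 1) / 2) ≤ 2 * ((s : ℝ) / (ε * Real.logb b B)) := by
        rw [div_div_eq_mul_div, mul_comm (s : ℝ) 2, mul_div_assoc]
        linarith
      have hcardk : ((F.image ii).card : ℝ) ≤ ((k - 2 - j₀ : ℕ) : ℝ) + 2 := by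
        have : (F.image ii).card ≤ (k - 2 - j₀) + 2 := by omega
        exact_mod_cast this
      calc ((F.image ii).card : ℝ) ≤ ((k - 2 - j₀ : ℕ) : ℝ) + 2 := hcardk
        _ ≤ (s : ℝ) / (ε * ((H : ℝ) + 1) / 2) + 2 := by linarith
        _ ≤ 2 * ((s : ℝ) / (ε * Real.logb b B)) + 2 := by linarith
        _ = 2 * ((s : ℝ) / (ε * Real.logb b B) + 1) := by ring
  · -- coverage
    intro n hn1 hn2
    set G := (Finset.range k).filter (fun j => dd j ≤ n) with hG
    have hGne : G.Nonempty := by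
      refine ⟨0, ?_⟩
      rw [hG, Finset.mem_filter, Finset.mem_range]
      exact ⟨by omega, by omega⟩
    set js := G.max' hGne with hjs
    have hjsG : js ∈ G := Finset.max'_mem G hGne
    have hjsk : js < k := Finset.mem_range.mp (Finset.mem_filter.mp hjsG).1
    have hjsdd : dd js ≤ n := (Finset.mem_filter.mp hjsG).2
    have hup : n < dd js + hh js := by
      rcases eq_or_ne js (k - 1) with hend | hend
      · rw [hend]; omega
      · by_contra hcon
        push_neg at hcon
        have hjs1k : js + 1 < k := by omega
        have : js + 1 ∈ G := by
          rw [hG, Finset.mem_filter, Finset.mem_range]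
          refine ⟨hjs1k, ?_⟩
          rw [hcons js hjs1k]
          exact hcon
        have := Finset.le_max' G (js + 1) this
        omega
    have hjsF : js ∈ F := by
      rw [hF, Finset.mem_filter, Finset.mem_range]
      exact ⟨hjsk, by omega⟩
    refine ⟨ii js, Finset.mem_image_of_mem ii hjsF, ?_⟩
    -- identify the vertex q.take n inside block js
    have hqtn : q.take (dd js) ++ (q.take n).drop (dd js) = q.take n := by
      have h1 : (q.take n).take (dd js) = q.take (dd js) := by
        rw [List.take_take, min_eq_left hjsdd]
      rw [← h1]
      exact List.take_append_drop _ _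
    have hvn : IsVertex t (q.take n) := by
      have : q.take n ++ q.drop n = q := List.take_append_drop _ q
      rw [← this] at hq
      exact isVertex_prefix hq
    have hrlen : ((q.take n).drop (dd js)).length < hh js := by
      rw [List.length_drop, List.length_take]
      omega
    have hbound := hpos js hjsk ((q.take n).drop (dd js)) (by rw [hqtn]; exact hvn) hrlen
    rw [hqtn] at hbound
    have hgbB : gb b (hh js) ≤ B := by
      rcases hblk js hjsk with ⟨h1, h2, _, _⟩
      exact gb_le_B hb hB hHdef h1 h2
    have hposdef : pos ε t (q.take n) = (vEBAux ε (height t) t).idxOf (q.take n) := rfl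
    rw [hposdef]
    exact ⟨hbound.1, by omega⟩

/-- If every internal vertex of `T` has at most `b` children (`b ≥ 2`)
and `B ≥ 2` is an integer, then there is an absolute constant `C` such that the positions
in `vEB_ε(T)` of any downward path with `s+1` vertices (the prefixes `q.take n` for
`q.length - s ≤ n ≤ q.length` of a vertex `q`) can be covered by at most
`C·(s/(ε·log_b B) + 1)` sets of consecutive positions, each of length at most `B`. -/
theorem branch_segment_block_cover :
    ∃ C : ℝ, 0 < C ∧
      ∀ (ε : ℝ), 0 < ε → ε ≤ 1/2 →
      ∀ (t : OTree), Uniform t →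
      ∀ (b : ℕ), 2 ≤ b → MaxArity t b →
      ∀ (B : ℕ), 2 ≤ B →
      ∀ (q : List ℕ), IsVertex t q →
      ∀ (s : ℕ), s ≤ q.length →
        ∃ I : Finset ℕ,
          (I.card : ℝ) ≤ C * ((s : ℝ) / (ε * Real.logb b B) + 1) ∧
          ∀ n, q.length - s ≤ n → n ≤ q.length →
            ∃ a ∈ I, a ≤ pos ε t (q.take n) ∧ pos ε t (q.take n) < a + B := by
  exact branch_segment_block_cover'

end VEB
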